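/- Let A₀ = B₀ = −σ_z, A₁ = A^z σ_z + A^x σ_x, B₁ = B^z σ_z + B^x σ_x with (A^z)² + (A^x)² = 1 and (B^z)² + (B^x)² = 1. Then the CHSH operator B = A₀⊗B₀ + A₀⊗B₁ + A₁⊗B₀ − A₁⊗B₁ on ℂ²⊗ℂ² has an eigenvalue of modulus 2√(1 + |A^x||B^x|). -/

import Mathlib

open Matrix Kronecker

noncomputable def sigmaX : Matrix (Fin 2) (Fin 2) ℂ := !![0, 1; 1, 0]
noncomputable def sigmaZ : Matrix (Fin 2) (Fin 2) ℂ := !![1, 0; 0, -1]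

lemma aux_eig (M : Matrix (Fin 2 × Fin 2) (Fin 2 × Fin 2) ℂ) (lam : ℂ)
    (u : (Fin 2 × Fin 2) → ℂ) (hu : u ≠ 0) (h : M.mulVec u = lam • u) :
    Module.End.HasEigenvalue (Matrix.toLin' M) lam :=
  Module.End.hasEigenvalue_of_hasEigenvector
    ⟨by rw [Module.End.mem_eigenspace_iff, Matrix.toLin'_apply, h], hu⟩

set_option maxHeartbeats 1000000 in
/-- The CHSH operator with settings `A₀ = B₀ = -σz`, `A₁ = Az σz + Ax σx`,
`B₁ = Bz σz + Bx σx` has an eigenvalue of modulus `2√(1+|Ax||Bx|)`. -/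
theorem stmt_9 (Az Ax Bz Bx : ℝ) (hA : Az ^ 2 + Ax ^ 2 = 1) (hB : Bz ^ 2 + Bx ^ 2 = 1)
    (A₀ A₁ B₀ B₁ : Matrix (Fin 2) (Fin 2) ℂ)
    (hA₀ : A₀ = -sigmaZ) (hB₀ : B₀ = -sigmaZ)
    (hA₁ : A₁ = (Az : ℂ) • sigmaZ + (Ax : ℂ) • sigmaX)
    (hB₁ : B₁ = (Bz : ℂ) • sigmaZ + (Bx : ℂ) • sigmaX) :
    ∃ lam : ℂ,
      Module.End.HasEigenvalue
        (Matrix.toLin' (A₀ ⊗ₖ B₀ + A₀ ⊗ₖ B₁ + A₁ ⊗ₖ B₀ - A₁ ⊗ₖ B₁)) lam ∧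
      ‖lam‖ = 2 * Real.sqrt (1 + |Ax| * |Bx|) := by
  subst hA₀ hB₀ hA₁ hB₁
  have hnn : (0:ℝ) ≤ 1 + |Ax| * |Bx| := by positivity
  set r : ℝ := Real.sqrt (1 + |Ax| * |Bx|) with hrdef
  have hr2 : r ^ 2 = 1 + |Ax| * |Bx| := Real.sq_sqrt hnn
  have hrnn : (0:ℝ) ≤ r := Real.sqrt_nonneg _
  have hA' : (Az:ℂ)^2 + (Ax:ℂ)^2 = 1 := by exact_mod_cast hA
  have hB' : (Bz:ℂ)^2 + (Bx:ℂ)^2 = 1 := by exact_mod_cast hB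
  refine ⟨2 * (r:ℂ), ?_, ?_⟩
  swap
  · rw [show (2*(r:ℂ)) = ((2*r : ℝ) : ℂ) by push_cast; ring, Complex.norm_real, Real.norm_eq_abs,
      abs_of_nonneg (by positivity)]
  rcases le_or_gt 0 (Ax * Bx) with hp | hp
  · -- |Ax||Bx| = Ax*Bx
    have habs : |Ax| * |Bx| = Ax * Bx := by rw [← abs_mul]; exact abs_of_nonneg hp
    have hr2' : r ^ 2 = 1 + Ax * Bx := by rw [hr2, habs]
    have hr' : (r:ℂ)^2 = 1 + (Ax:ℂ) * (Bx:ℂ) := by exact_mod_cast hr2'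
    by_cases hdeg : (1 - Az - Bz - Az*Bz + Ax*Bx + 2*r = 0) ∧ (Ax + Ax*Bz + Bx + Az*Bx = 0)
    · -- degenerate: use (0,1,1,0)
      obtain ⟨hd1, hd2⟩ := hdeg
      have hd1' : (1:ℂ) - Az - Bz - Az*Bz + Ax*Bx + 2*r = 0 := by exact_mod_cast hd1
      have hd2' : (Ax:ℂ) + Ax*Bz + Bx + Az*Bx = 0 := by exact_mod_cast hd2
      refine aux_eig _ _ (fun q => !![(0:ℂ), 1; 1, 0] q.1 q.2) ?_ ?_
      · intro h
        have := congrFun h (0, 1)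
        simp [Pi.zero_apply] at this
      · funext ⟨i, j⟩
        fin_cases i <;> fin_cases j <;>
            simp [Matrix.mulVec, dotProduct, Fintype.sum_prod_type, Fin.sum_univ_two,
              Matrix.kroneckerMap_apply, sigmaX, sigmaZ]
        · linear_combination -hd2'
        · linear_combination -hd1'
        · linear_combination -hd1'
        · linear_combination hd2'
    · refine aux_eig _ _
        (fun q => !![((1-Az-Bz-Az*Bz+Ax*Bx + 2*r : ℝ) : ℂ), ((-(Ax+Ax*Bz+Bx+Az*Bx) : ℝ) : ℂ);
                     ((-(Ax+Ax*Bz+Bx+Az*Bx) : ℝ) : ℂ), ((-(1-Az-Bz-Az*Bz+Ax*Bx + 2*r) : ℝ) : ℂ)]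
          q.1 q.2) ?_ ?_
      · intro h
        apply hdeg
        have h1 := congrFun h (0, 0)
        have h2 := congrFun h (0, 1)
        simp [Pi.zero_apply] at h1 h2
        constructor
        · have : ((1 - Az - Bz - Az*Bz + Ax*Bx + 2*r : ℝ) : ℂ) = 0 := by
            push_cast; linear_combination h1
          exact_mod_cast this
        · have : ((Ax + Ax*Bz + Bx + Az*Bx : ℝ) : ℂ) = 0 := by
            push_cast; linear_combination -h2
          exact_mod_cast this
      · funext ⟨i, j⟩
        fin_cases i <;> fin_cases j <;>
          simp [Matrix.mulVec, dotProduct, Fintype.sum_prod_type, Fin.sum_univ_two,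
            Matrix.kroneckerMap_apply, sigmaX, sigmaZ]
        · linear_combination (((Bx:ℂ))^2+(1+(Bz:ℂ))^2)*hA' + (2+2*(Az:ℂ))*hB' - 4*hr'
        · ring
        · ring
        · linear_combination (-((Bx:ℂ))^2-(1+(Bz:ℂ))^2)*hA' + (-2-2*(Az:ℂ))*hB' + 4*hr'
  · have habs : |Ax| * |Bx| = -(Ax * Bx) := by rw [← abs_mul]; exact abs_of_neg hp
    have hr2' : r ^ 2 = 1 - Ax * Bx := by rw [hr2, habs]; ring
    have hr' : (r:ℂ)^2 = 1 - (Ax:ℂ) * (Bx:ℂ) := by exact_mod_cast hr2'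
    by_cases hdeg : (1 - Az - Bz - Az*Bz - Ax*Bx + 2*r = 0) ∧ (Ax + Ax*Bz - Bx - Az*Bx = 0)
    · obtain ⟨hd1, hd2⟩ := hdeg
      have hd1' : (1:ℂ) - Az - Bz - Az*Bz - Ax*Bx + 2*r = 0 := by exact_mod_cast hd1
      have hd2' : (Ax:ℂ) + Ax*Bz - Bx - Az*Bx = 0 := by exact_mod_cast hd2
      refine aux_eig _ _ (fun q => !![(0:ℂ), 1; -1, 0] q.1 q.2) ?_ ?_
      · intro h
        have := congrFun h (0, 1)
        simp [Pi.zero_apply] at this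
      · funext ⟨i, j⟩
        fin_cases i <;> fin_cases j <;>
            simp [Matrix.mulVec, dotProduct, Fintype.sum_prod_type, Fin.sum_univ_two,
              Matrix.kroneckerMap_apply, sigmaX, sigmaZ]
        · linear_combination hd2'
        · linear_combination -hd1'
        · linear_combination hd1'
        · linear_combination hd2'
    · refine aux_eig _ _
        (fun q => !![((1-Az-Bz-Az*Bz-Ax*Bx + 2*r : ℝ) : ℂ), ((Ax+Ax*Bz-Bx-Az*Bx : ℝ) : ℂ);
                     ((-(Ax+Ax*Bz-Bx-Az*Bx) : ℝ) : ℂ), ((1-Az-Bz-Az*Bz-Ax*Bx + 2*r : ℝ) : ℂ)]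
          q.1 q.2) ?_ ?_
      · intro h
        apply hdeg
        have h1 := congrFun h (0, 0)
        have h2 := congrFun h (0, 1)
        simp [Pi.zero_apply] at h1 h2
        constructor
        · have : ((1 - Az - Bz - Az*Bz - Ax*Bx + 2*r : ℝ) : ℂ) = 0 := by
            push_cast; linear_combination h1
          exact_mod_cast this
        · have : ((Ax + Ax*Bz - Bx - Az*Bx : ℝ) : ℂ) = 0 := by
            push_cast; linear_combination h2
          exact_mod_cast this
      · funext ⟨i, j⟩
        fin_cases i <;> fin_cases j <;>
          simp [Matrix.mulVec, dotProduct, Fintype.sum_prod_type, Fin.sum_univ_two,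
            Matrix.kroneckerMap_apply, sigmaX, sigmaZ]
        · linear_combination (((Bx:ℂ))^2+(1+(Bz:ℂ))^2)*hA' + (2+2*(Az:ℂ))*hB' - 4*hr'
        · ring
        · ring
        · linear_combination (((Bx:ℂ))^2+(1+(Bz:ℂ))^2)*hA' + (2+2*(Az:ℂ))*hB' - 4*hr'
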